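/- Let f : 2^E → ℝ≥0 be monotone submodular, with S* a maximizer of f over sets of size at most k. If U ⊆ E satisfies f(U) ≥ α · f(S*) for some α > 0, then for every pair of sets A ⊇ U and B with |B| ≤ k and f(A∪B) > 0, we have f(A)/f(A∪B) ≥ α/(1+α). -/
import Mathlib

open Finset

theorem stmt_11 {E : Type*} [Fintype E] [DecidableEq E]
    (f : Finset E → ℝ) (hnn : ∀ S, 0 ≤ f S)
    (hmono : ∀ S T : Finset E, S ⊆ T → f S ≤ f T)
    (hsub : ∀ S T : Finset E, f S + f T ≥ f (S ∪ T) + f (S ∩ T))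
    (k : ℕ) (hk : 1 ≤ k)
    (Sstar : Finset E) (hScard : Sstar.card ≤ k)
    (hSmax : ∀ S : Finset E, S.card ≤ k → f S ≤ f Sstar)
    (α : ℝ) (hα : 0 < α)
    (U : Finset E) (hU : f U ≥ α * f Sstar)
    (A B : Finset E) (hUA : U ⊆ A) (hB : B.card ≤ k)
    (hpos : 0 < f (A ∪ B)) :
    f A / f (A ∪ B) ≥ α / (1 + α) := by
  have h1 := hsub A B
  have h2 := hSmax B hB
  have h3 := hmono U A hUA
  have h4 := hnn (A ∩ B)
  have hSnn := hnn Sstar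
  have hfa : α * f Sstar ≤ f A := le_trans hU h3
  have hub : f (A ∪ B) ≤ f A + f Sstar := by linarith
  rw [ge_iff_le, div_le_div_iff₀ (by linarith) hpos]
  nlinarith [mul_le_mul_of_nonneg_left hub (le_of_lt hα)]
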